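/- In the SEIR model with measurement y = I, if the total population satisfies S + E + I + R = 1 and βεy ≠ 0 at a time t, then R(t) is expressible as 1 - y - (ẏ + γy)/ε - (ÿ + (ε+γ)ẏ + εγy)/(βεy) evaluated at t. -/

import Mathlib

theorem seir_R_from_measurement
    (β ε γ : ℝ) (S E I R : ℝ → ℝ)
    (hε : ε ≠ 0) (hβ : β ≠ 0)
    (hS : ∀ t, HasDerivAt S (-β * S t * I t) t)
    (hE : ∀ t, HasDerivAt E (β * S t * I t - ε * E t) t)
    (hI : ∀ t, HasDerivAt I (ε * E t - γ * I t) t)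
    (hR : ∀ t, HasDerivAt R (γ * I t) t)
    (hsum : ∀ t, S t + E t + I t + R t = 1)
    (t : ℝ) (ht : β * ε * I t ≠ 0) :
    R t = 1 - I t - (deriv I t + γ * I t) / ε
        - (deriv (deriv I) t + (ε + γ) * deriv I t + ε * γ * I t)
          / (β * ε * I t) := by
  have hdI : deriv I = fun t => ε * E t - γ * I t := by
    funext s; exact (hI s).deriv
  have h1 : deriv I t = ε * E t - γ * I t := by rw [hdI]
  have h2 : deriv (deriv I) t = ε * (β * S t * I t - ε * E t) - γ * (ε * E t - γ * I t) := by
    rw [hdI]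
    exact (((hE t).const_mul ε).sub ((hI t).const_mul γ)).deriv
  rw [h1, h2]
  have hE' : (ε * E t - γ * I t + γ * I t) / ε = E t := by field_simp; ring
  have hS' : (ε * (β * S t * I t - ε * E t) - γ * (ε * E t - γ * I t) +
      (ε + γ) * (ε * E t - γ * I t) + ε * γ * I t) / (β * ε * I t) = S t := by
    have : (ε * (β * S t * I t - ε * E t) - γ * (ε * E t - γ * I t) +
      (ε + γ) * (ε * E t - γ * I t) + ε * γ * I t) = S t * (β * ε * I t) := by ring
    rw [this, mul_div_assoc, div_self ht, mul_one]
  rw [hE', hS']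
  have := hsum t; linarith
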